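/- (Finite-dimensional duality for the convex weight of states) Let F be a nonempty compact convex set of d×d density matrices and let ρ be a d×d density matrix. Then 1 − W_F(ρ) = inf { Re(tr(Y·ρ)) : Y a d×d positive semidefinite matrix such that Re(tr(Y·σ)) ≥ 1 for all σ ∈ F }. -/

import Mathlib

open scoped ENNReal NNReal ComplexOrder

/-- A density matrix: a positive semidefinite complex matrix of trace one. -/
def IsDensity {d : ℕ} (ρ : Matrix (Fin d) (Fin d) ℂ) : Prop :=
  ρ.PosSemidef ∧ ρ.trace = 1

/-- The convex weight of a state `ρ` w.r.t. a free set `F`: the infimum of those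
`μ ∈ [0,1]` for which there are a density matrix `τ` and `σ ∈ F` with
`ρ = μ • τ + (1 - μ) • σ`, with `inf ∅ = ∞`. -/
noncomputable def WgtS {d : ℕ} (F : Set (Matrix (Fin d) (Fin d) ℂ))
    (ρ : Matrix (Fin d) (Fin d) ℂ) : ℝ≥0∞ :=
  ⨅ μ ∈ {μ : ℝ | 0 ≤ μ ∧ μ ≤ 1 ∧ ∃ τ, IsDensity τ ∧
      ∃ σ ∈ F, ρ = μ • τ + (1 - μ) • σ}, ENNReal.ofReal μ

section Aux

open Matrix

variable {d : ℕ}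

lemma psd_smul_real {A : Matrix (Fin d) (Fin d) ℂ} (hA : A.PosSemidef) {a : ℝ} (ha : 0 ≤ a) :
    (a • A).PosSemidef := by
  refine Matrix.PosSemidef.of_dotProduct_mulVec_nonneg ?_ fun x => ?_
  · have h : (a • A)ᴴ = star a • Aᴴ := Matrix.conjTranspose_smul a A
    rw [Matrix.IsHermitian, h, star_trivial, hA.1]
  · rw [Matrix.smul_mulVec, dotProduct_smul, Complex.real_smul]
    exact mul_nonneg (Complex.zero_le_real.mpr ha) (hA.dotProduct_mulVec_nonneg x)

lemma psd_diag {A : Matrix (Fin d) (Fin d) ℂ} (hA : A.PosSemidef) (i : Fin d) : 0 ≤ A i i := by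
  have h := hA.dotProduct_mulVec_nonneg (Pi.single i 1)
  have hs : (star (Pi.single i (1:ℂ)) : Fin d → ℂ) = Pi.single i 1 := by
    ext j; simp [Pi.single_apply, apply_ite]
  rw [hs, Matrix.mulVec_single, single_dotProduct, one_mul] at h
  simpa using h

lemma psd_trace_nonneg {A : Matrix (Fin d) (Fin d) ℂ} (hA : A.PosSemidef) : 0 ≤ A.trace :=
  Finset.sum_nonneg fun i _ => psd_diag hA i

lemma psd_trace_mul_nonneg {Y P : Matrix (Fin d) (Fin d) ℂ} (hY : Y.PosSemidef)
    (hP : P.PosSemidef) : 0 ≤ (Y * P).trace := by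
  obtain ⟨B, rfl⟩ : ∃ B : Matrix (Fin d) (Fin d) ℂ, Y = Bᴴ * B := by
    open scoped MatrixOrder Matrix.Norms.L2Operator in
    exact CStarAlgebra.nonneg_iff_eq_star_mul_self.mp hY.nonneg
  rw [Matrix.mul_assoc, Matrix.trace_mul_comm]
  exact psd_trace_nonneg (hP.mul_mul_conjTranspose_same B)

lemma psd_vecMulVec (x : Fin d → ℂ) : (Matrix.vecMulVec x (star x)).PosSemidef := by
  rw [Matrix.vecMulVec_eq Unit, ← Matrix.conjTranspose_replicateCol]
  exact Matrix.posSemidef_self_mul_conjTranspose _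

lemma trace_mul_vecMulVec (Y : Matrix (Fin d) (Fin d) ℂ) (x : Fin d → ℂ) :
    (Y * Matrix.vecMulVec x (star x)).trace = dotProduct (star x) (Y *ᵥ x) := by
  simp only [Matrix.trace, Matrix.diag, Matrix.mul_apply, Matrix.vecMulVec_apply,
    dotProduct, Matrix.mulVec]
  rw [Finset.sum_congr rfl (fun i _ => Finset.mul_sum (Finset.univ) (fun k => Y i k * x k) (star x i))]
  refine Finset.sum_congr rfl fun i _ => Finset.sum_congr rfl fun k _ => by
    simp [Pi.star_apply]; ring

lemma isClosed_psd : IsClosed {A : Matrix (Fin d) (Fin d) ℂ | A.PosSemidef} := by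
  have h1 : {A : Matrix (Fin d) (Fin d) ℂ | A.PosSemidef} =
      {A : Matrix (Fin d) (Fin d) ℂ | Aᴴ = A} ∩
        ⋂ x : Fin d → ℂ, {A | 0 ≤ dotProduct (star x) (A *ᵥ x)} := by
    ext A; simp [Matrix.posSemidef_iff_dotProduct_mulVec, Matrix.IsHermitian, Set.mem_iInter]
  rw [h1]
  refine IsClosed.inter (isClosed_eq (continuous_id.matrix_conjTranspose) continuous_id)
    (isClosed_iInter fun x => ?_)
  have hcl : IsClosed {z : ℂ | 0 ≤ z} := by
    have h2 : {z : ℂ | 0 ≤ z} = Complex.re ⁻¹' Set.Ici 0 ∩ Complex.im ⁻¹' {0} := by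
      ext z; simp [Complex.nonneg_iff, eq_comm]
    rw [h2]
    exact (isClosed_Ici.preimage Complex.continuous_re).inter
      (isClosed_singleton.preimage Complex.continuous_im)
  exact hcl.preimage
    (continuous_const.dotProduct (continuous_id.matrix_mulVec continuous_const))

lemma convex_psd : Convex ℝ {A : Matrix (Fin d) (Fin d) ℂ | A.PosSemidef} := by
  intro A hA B hB a b ha hb _
  exact (psd_smul_real hA ha).add (psd_smul_real hB hb)

lemma stdBasis_decomp (k i : Fin d) (z : ℂ) :
    Matrix.single k i z =
      z.re • Matrix.single k i 1 + z.im • Matrix.single k i Complex.I := by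
  rw [Matrix.smul_single, Matrix.smul_single, ← Matrix.single_add]
  rw [Complex.real_smul, Complex.real_smul, mul_one]
  exact congrArg _ (Complex.re_add_im z).symm

noncomputable def repMat (f : Matrix (Fin d) (Fin d) ℂ →L[ℝ] ℝ) : Matrix (Fin d) (Fin d) ℂ :=
  Matrix.of fun i k => (f (Matrix.single k i 1) : ℂ) -
    Complex.I * (f (Matrix.single k i Complex.I) : ℂ)

lemma re_trace_repMat (f : Matrix (Fin d) (Fin d) ℂ →L[ℝ] ℝ) (X : Matrix (Fin d) (Fin d) ℂ) :
    ((repMat f * X).trace).re = f X := by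
  conv_rhs => rw [Matrix.matrix_eq_sum_single X]
  rw [map_sum, Finset.sum_congr rfl (fun i _ => (map_sum f _ _))]
  simp only [Matrix.trace, Matrix.diag, Matrix.mul_apply, Complex.re_sum]
  rw [Finset.sum_comm]
  refine Finset.sum_congr rfl fun k _ => Finset.sum_congr rfl fun i _ => ?_
  rw [stdBasis_decomp k i (X k i), map_add, _root_.map_smul, _root_.map_smul]
  simp only [repMat, Matrix.of_apply, smul_eq_mul]
  simp [Complex.mul_re, Complex.sub_re, Complex.sub_im, Complex.mul_im]
  ring

noncomputable def hermOf (f : Matrix (Fin d) (Fin d) ℂ →L[ℝ] ℝ) : Matrix (Fin d) (Fin d) ℂ :=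
  (2⁻¹ : ℝ) • (repMat f + (repMat f)ᴴ)

lemma hermOf_isHermitian (f : Matrix (Fin d) (Fin d) ℂ →L[ℝ] ℝ) : (hermOf f).IsHermitian := by
  have h : (repMat f + (repMat f)ᴴ).IsHermitian := by
    rw [Matrix.IsHermitian, Matrix.conjTranspose_add, Matrix.conjTranspose_conjTranspose, add_comm]
  rw [Matrix.IsHermitian, hermOf, Matrix.conjTranspose_smul, star_trivial, h]

lemma trace_conjT_mul {A X : Matrix (Fin d) (Fin d) ℂ} (hX : X.IsHermitian) :
    (Aᴴ * X).trace = star ((A * X).trace) := by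
  have h1 : Aᴴ * X = (Xᴴ * A)ᴴ := by
    rw [Matrix.conjTranspose_mul, Matrix.conjTranspose_conjTranspose]
  rw [h1, Matrix.trace_conjTranspose, hX.eq, Matrix.trace_mul_comm]

lemma trace_hermOf_mul (f : Matrix (Fin d) (Fin d) ℂ →L[ℝ] ℝ) {X : Matrix (Fin d) (Fin d) ℂ}
    (hX : X.IsHermitian) :
    ((hermOf f) * X).trace = ((((repMat f * X).trace).re : ℝ) : ℂ) := by
  rw [hermOf, Matrix.smul_mul, Matrix.trace_smul, Matrix.add_mul, Matrix.trace_add,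
    trace_conjT_mul hX]
  rw [Complex.star_def, Complex.add_conj, Complex.real_smul]
  push_cast
  ring

lemma re_trace_hermOf_mul (f : Matrix (Fin d) (Fin d) ℂ →L[ℝ] ℝ) {X : Matrix (Fin d) (Fin d) ℂ}
    (hX : X.IsHermitian) : ((hermOf f * X).trace).re = f X := by
  rw [trace_hermOf_mul f hX, Complex.ofReal_re, re_trace_repMat]

lemma hermOf_psd (f : Matrix (Fin d) (Fin d) ℂ →L[ℝ] ℝ)
    (hf0 : ∀ P : Matrix (Fin d) (Fin d) ℂ, P.PosSemidef → 0 ≤ f P) : (hermOf f).PosSemidef := by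
  refine Matrix.PosSemidef.of_dotProduct_mulVec_nonneg (hermOf_isHermitian f) fun x => ?_
  have h1 : dotProduct (star x) ((hermOf f) *ᵥ x)
      = ((hermOf f) * Matrix.vecMulVec x (star x)).trace := (trace_mul_vecMulVec _ x).symm
  rw [h1, trace_hermOf_mul f (psd_vecMulVec x).1, re_trace_repMat]
  exact Complex.zero_le_real.mpr (hf0 _ (psd_vecMulVec x))

lemma matrix_locallyConvex : LocallyConvexSpace ℝ (Matrix (Fin d) (Fin d) ℂ) := by
  letI : NormedAddCommGroup (Matrix (Fin d) (Fin d) ℂ) := Matrix.normedAddCommGroup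
  letI : NormedSpace ℝ (Matrix (Fin d) (Fin d) ℂ) := Matrix.normedSpace
  exact NormedSpace.toLocallyConvexSpace

end Aux

/-- Finite-dimensional duality for the convex weight of states:
`1 - W_F(ρ)` equals the optimal value of the dual program over witnesses `Y ≥ 0`
with `Re tr(Y σ) ≥ 1` on `F`. -/
theorem wgt_duality {d : ℕ} (F : Set (Matrix (Fin d) (Fin d) ℂ))
    (hne : F.Nonempty) (hcomp : IsCompact F) (hconv : Convex ℝ F)
    (hFd : ∀ σ ∈ F, IsDensity σ)
    (ρ : Matrix (Fin d) (Fin d) ℂ) (hρ : IsDensity ρ) :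
    1 - (WgtS F ρ).toReal =
      sInf {x : ℝ | ∃ Y : Matrix (Fin d) (Fin d) ℂ, Y.PosSemidef ∧
        (∀ σ ∈ F, 1 ≤ ((Y * σ).trace).re) ∧ x = ((Y * ρ).trace).re} := by
  classical
  obtain ⟨σ₀, hσ₀⟩ := hne
  set S : Set ℝ := {μ : ℝ | 0 ≤ μ ∧ μ ≤ 1 ∧ ∃ σ ∈ F, (ρ - (1 - μ) • σ).PosSemidef} with hSdef
  have h1S : (1:ℝ) ∈ S := ⟨zero_le_one, le_refl 1, σ₀, hσ₀, by simpa using hρ.1⟩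
  -- compactness of S
  have hScomp : IsCompact S := by
    have hcont : Continuous (fun p : ℝ × Matrix (Fin d) (Fin d) ℂ => ρ - (1 - p.1) • p.2) :=
      continuous_const.sub ((continuous_const.sub continuous_fst).smul continuous_snd)
    have hK : IsCompact ((Set.Icc (0:ℝ) 1 ×ˢ F) ∩
        (fun p : ℝ × Matrix (Fin d) (Fin d) ℂ => ρ - (1 - p.1) • p.2) ⁻¹'
          {A | A.PosSemidef}) :=
      (isCompact_Icc.prod hcomp).inter_right (isClosed_psd.preimage hcont)
    have him : S = Prod.fst '' ((Set.Icc (0:ℝ) 1 ×ˢ F) ∩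
        (fun p : ℝ × Matrix (Fin d) (Fin d) ℂ => ρ - (1 - p.1) • p.2) ⁻¹'
          {A | A.PosSemidef}) := by
      ext μ
      constructor
      · rintro ⟨h0, h1, σ, hσ, hpsd⟩
        exact ⟨(μ, σ), ⟨⟨⟨h0, h1⟩, hσ⟩, hpsd⟩, rfl⟩
      · rintro ⟨⟨μ', σ⟩, ⟨⟨⟨h0, h1⟩, hσ⟩, hpsd⟩, rfl⟩
        exact ⟨h0, h1, σ, hσ, hpsd⟩
    rw [him]
    exact hK.image continuous_fst
  set μs := sInf S with hμsdef
  have hμmem : μs ∈ S := hScomp.sInf_mem ⟨1, h1S⟩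
  obtain ⟨hμ0, hμ1, σs, hσsF, hPSDs⟩ := hμmem
  have hμlb : ∀ μ ∈ S, μs ≤ μ := fun μ hμ => csInf_le hScomp.bddBelow hμ
  have hσsD := hFd σs hσsF
  -- the membership set of WgtS
  set P : Set ℝ := {μ : ℝ | 0 ≤ μ ∧ μ ≤ 1 ∧ ∃ τ, IsDensity τ ∧
      ∃ σ ∈ F, ρ = μ • τ + (1 - μ) • σ} with hPdef
  have hPS : P ⊆ S := by
    rintro μ ⟨h0, h1, τ, hτ, σ, hσ, heq⟩
    refine ⟨h0, h1, σ, hσ, ?_⟩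
    have h2 : ρ - (1 - μ) • σ = μ • τ := by rw [heq, add_sub_cancel_right]
    rw [h2]
    exact psd_smul_real hτ.1 h0
  have h1P : (1:ℝ) ∈ P := by
    refine ⟨zero_le_one, le_refl 1, ρ, hρ, σ₀, hσ₀, by simp⟩
  have hBP : ∀ μ' : ℝ, μs < μ' → μ' ≤ 1 → μ' ∈ P := by
    intro μ' hlt hle1
    have h0' : 0 < μ' := lt_of_le_of_lt hμ0 hlt
    set D := ρ - (1 - μ') • σs with hDdef
    have hD : D.PosSemidef := by
      have hsplit : D = (ρ - (1 - μs) • σs) + (μ' - μs) • σs := by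
        rw [hDdef]; module
      rw [hsplit]
      exact hPSDs.add (psd_smul_real hσsD.1 (by linarith))
    have htrD : D.trace = ((μ' : ℝ) : ℂ) := by
      rw [hDdef, Matrix.trace_sub, Matrix.trace_smul, hρ.2, hσsD.2, Complex.real_smul]
      push_cast
      ring
    refine ⟨h0'.le, hle1, (μ'⁻¹ : ℝ) • D, ⟨psd_smul_real hD (inv_nonneg.mpr h0'.le), ?_⟩,
      σs, hσsF, ?_⟩
    · rw [Matrix.trace_smul, htrD]
      rw [Complex.real_smul, ← Complex.ofReal_mul, inv_mul_cancel₀ h0'.ne']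
      norm_num
    · rw [smul_smul, mul_inv_cancel₀ h0'.ne', one_smul, hDdef, sub_add_cancel]
  -- value of WgtS
  have hW : WgtS F ρ = ENNReal.ofReal μs := by
    apply le_antisymm
    · refine ENNReal.le_of_forall_pos_le_add fun ε hε _ => ?_
      have hμ' : min 1 (μs + ε) ∈ P := by
        rcases le_total (μs + ε) 1 with h | h
        · rw [min_eq_right h]
          exact hBP _ (by exact lt_add_of_pos_right μs (by exact_mod_cast hε)) h
        · rw [min_eq_left h]
          exact h1P
      calc WgtS F ρ ≤ ENNReal.ofReal (min 1 (μs + ε)) := by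
            rw [WgtS]
            exact iInf₂_le _ hμ'
        _ ≤ ENNReal.ofReal (μs + ε) := ENNReal.ofReal_le_ofReal (min_le_right _ _)
        _ ≤ ENNReal.ofReal μs + ε := by
            rw [ENNReal.ofReal_add hμ0 (by exact_mod_cast hε.le)]
            simp
    · rw [WgtS]
      exact le_iInf₂ fun μ hμ => ENNReal.ofReal_le_ofReal (hμlb μ (hPS hμ))
  have htoReal : (WgtS F ρ).toReal = μs := by rw [hW, ENNReal.toReal_ofReal hμ0]
  rw [htoReal]
  set lam := 1 - μs with hlamdef
  have hlam0 : 0 ≤ lam := by rw [hlamdef]; linarith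
  have hlam1 : lam ≤ 1 := by rw [hlamdef]; linarith
  set V : Set ℝ := {x : ℝ | ∃ Y : Matrix (Fin d) (Fin d) ℂ, Y.PosSemidef ∧
      (∀ σ ∈ F, 1 ≤ ((Y * σ).trace).re) ∧ x = ((Y * ρ).trace).re} with hVdef
  have hPSDlam : (ρ - lam • σs).PosSemidef := hPSDs
  -- weak duality
  have hweak : ∀ x ∈ V, lam ≤ x := by
    rintro x ⟨Y, hY, hYF, rfl⟩
    have h0 : 0 ≤ ((Y * (ρ - lam • σs)).trace).re :=
      (Complex.nonneg_iff.mp (psd_trace_mul_nonneg hY hPSDlam)).1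
    have hexp : ((Y * (ρ - lam • σs)).trace).re
        = ((Y * ρ).trace).re - lam * ((Y * σs).trace).re := by
      rw [Matrix.mul_sub, Matrix.mul_smul, Matrix.trace_sub, Matrix.trace_smul,
        Complex.sub_re, Complex.smul_re]
      rfl
    rw [hexp] at h0
    have h1 := mul_le_mul_of_nonneg_left (hYF σs hσsF) hlam0
    linarith
  have hVne : (1:ℝ) ∈ V := by
    refine ⟨1, Matrix.PosSemidef.one, fun σ hσ => ?_, ?_⟩
    · rw [Matrix.one_mul, (hFd σ hσ).2]; norm_num
    · rw [Matrix.one_mul, hρ.2]; norm_num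
  have hVbdd : BddBelow V := ⟨lam, hweak⟩
  have le1 : lam ≤ sInf V := le_csInf ⟨1, hVne⟩ hweak
  -- strong duality
  have hstrong : ∀ ε : ℝ, 0 < ε → sInf V ≤ lam + ε := by
    intro ε hε
    set lam' := lam + ε with hlam'def
    have hlam'pos : 0 < lam' := by rw [hlam'def]; linarith
    -- no PSD witness beyond lam
    have hno : ∀ σ ∈ F, ¬ (ρ - lam' • σ).PosSemidef := by
      intro σ hσ hcontra
      have htr : (ρ - lam' • σ).trace = (((1 - lam' : ℝ)) : ℂ) := by
        rw [Matrix.trace_sub, Matrix.trace_smul, hρ.2, (hFd σ hσ).2, Complex.real_smul]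
        push_cast; ring
      have h1' : (0:ℂ) ≤ (((1 - lam' : ℝ)) : ℂ) := htr ▸ psd_trace_nonneg hcontra
      have hle1 : lam' ≤ 1 := by
        have := Complex.zero_le_real.mp h1'
        linarith
      have hmem : (1 - lam') ∈ S := by
        refine ⟨by linarith, by linarith, σ, hσ, ?_⟩
        have hh : (1:ℝ) - (1 - lam') = lam' := by ring
        rw [hh]
        exact hcontra
      linarith [hμlb _ hmem]
    -- separation
    set Aset := (fun σ => ρ - lam' • σ) '' F with hAdef
    have hAcomp : IsCompact Aset :=
      hcomp.image (continuous_const.sub (continuous_id.const_smul lam'))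
    have hAconv : Convex ℝ Aset := by
      rintro x ⟨σ1, hσ1, rfl⟩ y ⟨σ2, hσ2, rfl⟩ a b ha hb hab
      refine ⟨a • σ1 + b • σ2, hconv hσ1 hσ2 ha hb hab, ?_⟩
      have key : a • (ρ - lam' • σ1) + b • (ρ - lam' • σ2)
          = (a + b) • ρ - lam' • (a • σ1 + b • σ2) := by module
      rw [hab, one_smul] at key
      exact key.symm
    have hdisj : Disjoint Aset {A : Matrix (Fin d) (Fin d) ℂ | A.PosSemidef} := by
      rw [Set.disjoint_left]
      rintro _ ⟨σ, hσ, rfl⟩ hP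
      exact hno σ hσ hP
    haveI : LocallyConvexSpace ℝ (Matrix (Fin d) (Fin d) ℂ) := matrix_locallyConvex
    obtain ⟨f, u, v, hfu, huv, hvf⟩ :=
      geometric_hahn_banach_compact_closed hAconv hAcomp convex_psd isClosed_psd hdisj
    have hv0 : v < 0 := by
      have h := hvf 0 Matrix.PosSemidef.zero
      rwa [map_zero] at h
    have hf0 : ∀ Q : Matrix (Fin d) (Fin d) ℂ, Q.PosSemidef → 0 ≤ f Q := by
      intro Q hQ
      by_contra h
      push_neg at h
      have ht : 0 ≤ (v - 1) / f Q := le_of_lt (div_pos_of_neg_of_neg (by linarith) h)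
      have h2 := hvf (((v - 1) / f Q) • Q) (psd_smul_real hQ ht)
      rw [_root_.map_smul, smul_eq_mul, div_mul_cancel₀ _ (ne_of_lt h)] at h2
      linarith
    have hfρ : 0 ≤ f ρ := hf0 ρ hρ.1
    have hsep : ∀ σ ∈ F, f ρ - lam' * f σ < v := by
      intro σ hσ
      have h := hfu _ ⟨σ, hσ, rfl⟩
      rw [map_sub, _root_.map_smul, smul_eq_mul] at h
      linarith
    set c := (f ρ - v) / lam' with hcdef
    have hc : 0 < c := div_pos (by linarith) hlam'pos
    have hflb : ∀ σ ∈ F, c < f σ := by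
      intro σ hσ
      have h := hsep σ hσ
      rw [hcdef, div_lt_iff₀ hlam'pos]
      nlinarith
    set Y := (c⁻¹ : ℝ) • hermOf f with hYdef
    have hYpsd : Y.PosSemidef := psd_smul_real (hermOf_psd f hf0) (inv_nonneg.mpr hc.le)
    have htrY : ∀ X : Matrix (Fin d) (Fin d) ℂ, X.IsHermitian →
        ((Y * X).trace).re = c⁻¹ * f X := by
      intro X hX
      rw [hYdef, Matrix.smul_mul, Matrix.trace_smul, Complex.smul_re,
        re_trace_hermOf_mul f hX]
      rfl
    have hxV : ((Y * ρ).trace).re ∈ V := by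
      refine ⟨Y, hYpsd, fun σ hσ => ?_, rfl⟩
      rw [htrY σ (hFd σ hσ).1.1]
      rw [← div_eq_inv_mul, le_div_iff₀ hc]
      have := hflb σ hσ
      linarith
    have hxval : ((Y * ρ).trace).re < lam' := by
      rw [htrY ρ hρ.1.1, ← div_eq_inv_mul, div_lt_iff₀ hc]
      have h : lam' * c = f ρ - v := by
        rw [hcdef, mul_div_cancel₀ _ hlam'pos.ne']
      nlinarith
    calc sInf V ≤ ((Y * ρ).trace).re := csInf_le hVbdd hxV
      _ ≤ lam + ε := by rw [← hlam'def]; linarith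
  have ge1 : sInf V ≤ lam := by
    by_contra h
    push_neg at h
    have hε : 0 < (sInf V - lam) / 2 := by linarith
    have := hstrong _ hε
    linarith
  exact le_antisymm le1 ge1
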